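/- arXiv:1507.01418 — 2 statements merged into one kernel-verified Lean document; each statement's English description precedes it below -/
import Mathlib

section
/- Let X be a complex Banach space, let A be a bounded linear operator on X, let θ ∈ ℝ and ω ∈ ℝ. Then the following are equivalent: (i) for every real λ > ω, the point e^{iθ}λ belongs to the resolvent set of A and ‖(e^{iθ}λ·I − A)^{-1}‖ ≤ 1/(λ − ω); (ii) for every x ∈ X there exists j ∈ J(x) such that Re(e^{-iθ}·j(Ax)) ≤ ω‖x‖², and there exists a real λ > ω such that e^{iθ}λ·I − A is surjective. -/
open Complex Filter Topology

set_option linter.unusedSectionVars false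
set_option linter.unusedVariables false
set_option maxHeartbeats 1000000

variable {X : Type*} [NormedAddCommGroup X] [NormedSpace ℂ X] [CompleteSpace X]

/-- The open half plane `H_{θ,ω}`, the rotation by the angle `θ` of `{z | Re z > ω}`. -/
def halfPlane (θ ω : ℝ) : Set ℂ :=
  {z : ℂ | ω < (Complex.exp (-(θ : ℂ) * Complex.I) * z).re}

/-- The numerical resolvent set of a bounded operator `A` : the union of all open half
planes `H_{θ,ω}` contained in the resolvent set of `A` on which
`‖R(z, A)‖ ≤ 1 / dist(z, ∂H_{θ,ω}) = 1 / (Re (e^{-iθ} z) - ω)`. -/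
noncomputable def numResolventSet (A : X →L[ℂ] X) : Set ℂ :=
  {z : ℂ | ∃ θ ω : ℝ, z ∈ halfPlane θ ω ∧ halfPlane θ ω ⊆ resolventSet ℂ A ∧
    ∀ w ∈ halfPlane θ ω,
      ‖resolvent A w‖ ≤ 1 / ((Complex.exp (-(θ : ℂ) * Complex.I) * w).re - ω)}

/-- The numerical spectrum of a bounded operator `A`. -/
noncomputable def numSpectrum (A : X →L[ℂ] X) : Set ℂ := (numResolventSet A)ᶜ

/-- The duality set `J(x)` of a vector `x`. -/
noncomputable def dualitySet (x : X) : Set (X →L[ℂ] ℂ) :=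
  {j | j x = (‖x‖ ^ 2 : ℝ) ∧ ‖j‖ = ‖x‖}

lemma lower_bound (B : X →L[ℂ] X) (ω : ℝ)
    (hd : ∀ x : X, ∃ j ∈ dualitySet x, (j (B x)).re ≤ ω * ‖x‖ ^ 2)
    {lam : ℝ} (hl : ω < lam) (x : X) :
    (lam - ω) * ‖x‖ ≤ ‖((lam : ℂ) • (1 : X →L[ℂ] X) - B) x‖ := by
  obtain ⟨j, ⟨hjx, hjn⟩, hre⟩ := hd x
  have h1 : (j (((lam : ℂ) • (1 : X →L[ℂ] X) - B) x)).re = lam * ‖x‖ ^ 2 - (j (B x)).re := by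
    simp [ContinuousLinearMap.sub_apply, ContinuousLinearMap.smul_apply, map_sub, hjx, ← Complex.ofReal_pow]
  have h2 : (lam - ω) * ‖x‖ ^ 2 ≤ (j (((lam : ℂ) • (1 : X →L[ℂ] X) - B) x)).re := by
    rw [h1]; nlinarith
  have h3 : (j (((lam : ℂ) • (1 : X →L[ℂ] X) - B) x)).re ≤ ‖x‖ * ‖((lam : ℂ) • (1 : X →L[ℂ] X) - B) x‖ := by
    calc (j (((lam : ℂ) • (1 : X →L[ℂ] X) - B) x)).re ≤ ‖j (((lam : ℂ) • (1 : X →L[ℂ] X) - B) x)‖ :=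
          Complex.re_le_norm _
      _ ≤ ‖j‖ * ‖((lam : ℂ) • (1 : X →L[ℂ] X) - B) x‖ := j.le_opNorm _
      _ = ‖x‖ * ‖((lam : ℂ) • (1 : X →L[ℂ] X) - B) x‖ := by rw [hjn]
  rcases eq_or_lt_of_le (norm_nonneg x) with h0 | h0
  · simp [← h0]
  · have := le_trans h2 h3
    nlinarith

lemma unit_of_lb_surj {T : X →L[ℂ] X} {c : ℝ} (hc : 0 < c)
    (hlb : ∀ x, c * ‖x‖ ≤ ‖T x‖) (hsurj : Function.Surjective T) :
    ∃ u : (X →L[ℂ] X)ˣ, (u : X →L[ℂ] X) = T ∧ ‖((u⁻¹ : (X →L[ℂ] X)ˣ) : X →L[ℂ] X)‖ ≤ 1 / c := by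
  have hinj : Function.Injective T := by
    intro a b hab
    have h1 : T (a - b) = 0 := by rw [map_sub, hab, sub_self]
    have h2 := hlb (a - b)
    rw [h1, norm_zero] at h2
    have h3 : ‖a - b‖ ≤ 0 := by nlinarith [norm_nonneg (a - b)]
    have h4 : a - b = 0 := norm_le_zero_iff.mp h3
    exact sub_eq_zero.mp h4
  let e : X ≃L[ℂ] X := ContinuousLinearEquiv.ofBijective T
    (LinearMap.ker_eq_bot.mpr hinj) (LinearMap.range_eq_top.mpr hsurj)
  have hecoe : ∀ x, e x = T x := fun x => rfl
  refine ⟨⟨T, e.symm.toContinuousLinearMap, ?_, ?_⟩, rfl, ?_⟩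
  · ext y
    simp only [ContinuousLinearMap.mul_apply, ContinuousLinearMap.one_apply,
      ContinuousLinearEquiv.coe_coe]
    rw [← hecoe]
    exact e.apply_symm_apply y
  · ext y
    simp only [ContinuousLinearMap.mul_apply, ContinuousLinearMap.one_apply,
      ContinuousLinearEquiv.coe_coe]
    rw [← hecoe]
    exact e.symm_apply_apply y
  · refine ContinuousLinearMap.opNorm_le_bound _ (by positivity) fun y => ?_
    have h5 := hlb (e.symm y)
    have h6 : T (e.symm y) = y := by rw [← hecoe]; exact e.apply_symm_apply y
    rw [h6] at h5
    show ‖e.symm y‖ ≤ 1 / c * ‖y‖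
    rw [div_mul_eq_mul_div, le_div_iff₀ hc]
    nlinarith [norm_nonneg (e.symm y)]

lemma surj_of_isUnit {T : X →L[ℂ] X} (h : IsUnit T) : Function.Surjective T := by
  obtain ⟨w, hw⟩ := h
  intro y
  refine ⟨((w⁻¹ : _ˣ) : X →L[ℂ] X) y, ?_⟩
  have h1 : T * ((w⁻¹ : _ˣ) : X →L[ℂ] X) = 1 := by rw [← hw]; exact w.mul_inv
  calc T (((w⁻¹ : _ˣ) : X →L[ℂ] X) y) = (T * ((w⁻¹ : _ˣ) : X →L[ℂ] X)) y := rfl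
    _ = y := by rw [h1]; rfl

lemma spread [Nontrivial X] (B : X →L[ℂ] X) (ω : ℝ)
    (hd : ∀ x : X, ∃ j ∈ dualitySet x, (j (B x)).re ≤ ω * ‖x‖ ^ 2)
    {mu : ℝ} (hmu : ω < mu) (hsurj : Function.Surjective ⇑((mu : ℂ) • (1 : X →L[ℂ] X) - B))
    {lam : ℝ} (h1 : ω < lam) (h2 : lam < 2 * mu - ω) :
    Function.Surjective ⇑((lam : ℂ) • (1 : X →L[ℂ] X) - B) := by
  obtain ⟨u, hu, hub⟩ := unit_of_lb_surj (show (0:ℝ) < mu - ω by linarith)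
    (fun x => lower_bound B ω hd hmu x) hsurj
  have hinvpos : 0 < ‖((u⁻¹ : _ˣ) : X →L[ℂ] X)‖ := Units.norm_pos u⁻¹
  have hinv_ge : mu - ω ≤ ‖((u⁻¹ : _ˣ) : X →L[ℂ] X)‖⁻¹ := by
    rw [← inv_inv (mu - ω)]
    apply inv_anti₀ hinvpos
    rw [← one_div (mu - ω)]
    exact hub
  have hdiff : ((lam : ℂ) • (1 : X →L[ℂ] X) - B) - (u : X →L[ℂ] X)
      = ((lam - mu : ℝ) : ℂ) • (1 : X →L[ℂ] X) := by
    rw [hu]; push_cast; rw [sub_sub_sub_cancel_right, ← sub_smul]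
  have hone : ‖(1 : X →L[ℂ] X)‖ = 1 := ContinuousLinearMap.norm_id
  have hnd : ‖((lam : ℂ) • (1 : X →L[ℂ] X) - B) - (u : X →L[ℂ] X)‖
      < ‖((u⁻¹ : _ˣ) : X →L[ℂ] X)‖⁻¹ := by
    have habs : |lam - mu| < mu - ω := abs_lt.mpr ⟨by linarith, by linarith⟩
    calc ‖((lam : ℂ) • (1 : X →L[ℂ] X) - B) - (u : X →L[ℂ] X)‖
        = ‖((lam - mu : ℝ) : ℂ) • (1 : X →L[ℂ] X)‖ := by rw [hdiff]
      _ ≤ ‖((lam - mu : ℝ) : ℂ)‖ * ‖(1 : X →L[ℂ] X)‖ := ContinuousLinearMap.opNorm_smul_le _ _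
      _ = |lam - mu| := by rw [hone, mul_one, Complex.norm_real, Real.norm_eq_abs]
      _ < mu - ω := habs
      _ ≤ _ := hinv_ge
  exact surj_of_isUnit (u.ofNearby _ hnd).isUnit

lemma surj_all [Nontrivial X] (B : X →L[ℂ] X) (ω : ℝ)
    (hd : ∀ x : X, ∃ j ∈ dualitySet x, (j (B x)).re ≤ ω * ‖x‖ ^ 2)
    {lam₀ : ℝ} (h0 : ω < lam₀) (hs : Function.Surjective ⇑((lam₀ : ℂ) • (1 : X →L[ℂ] X) - B))
    {lam : ℝ} (hl : ω < lam) :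
    Function.Surjective ⇑((lam : ℂ) • (1 : X →L[ℂ] X) - B) := by
  set c := lam₀ - ω with hc
  have hcpos : 0 < c := by simp [hc]; linarith
  have key : ∀ n : ℕ, ∀ mu : ℝ, ω < mu → mu < ω + 2 ^ n * c →
      Function.Surjective ⇑((mu : ℂ) • (1 : X →L[ℂ] X) - B) := by
    intro n
    induction n with
    | zero =>
        intro mu h1 h2
        refine spread B ω hd h0 hs h1 ?_
        simp only [pow_zero, one_mul] at h2
        linarith
    | succ n ih =>
        intro mu h1 h2
        by_cases hcase : mu < ω + 2 ^ n * c
        · exact ih mu h1 hcase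
        · push_neg at hcase
          set ν : ℝ := ((mu + ω) / 2 + (ω + 2 ^ n * c)) / 2 with hν
          have hp : (0:ℝ) < 2 ^ n * c := by positivity
          have h2' : mu - ω < 2 * (2 ^ n * c) := by
            rw [pow_succ] at h2; linarith
          have hν1 : ω < ν := by
            rw [hν]; nlinarith
          have hν2 : ν < ω + 2 ^ n * c := by
            rw [hν]; nlinarith
          have hν3 : mu < 2 * ν - ω := by
            rw [hν]; nlinarith
          exact spread B ω hd hν1 (ih ν hν1 hν2) h1 hν3
  obtain ⟨n, hn⟩ := pow_unbounded_of_one_lt ((lam - ω) / c) (one_lt_two (α := ℝ))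
  refine key n lam hl ?_
  rw [div_lt_iff₀ hcpos] at hn
  linarith

lemma reverse_core [Nontrivial X] (B : X →L[ℂ] X) (ω : ℝ)
    (hd : ∀ x : X, ∃ j ∈ dualitySet x, (j (B x)).re ≤ ω * ‖x‖ ^ 2)
    {lam₀ : ℝ} (h0 : ω < lam₀) (hs : Function.Surjective ⇑((lam₀ : ℂ) • (1 : X →L[ℂ] X) - B))
    {lam : ℝ} (hl : ω < lam) :
    (lam : ℂ) ∈ resolventSet ℂ B ∧ ‖resolvent B (lam : ℂ)‖ ≤ 1 / (lam - ω) := by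
  obtain ⟨u, hu, hub⟩ := unit_of_lb_surj (show (0:ℝ) < lam - ω by linarith)
    (fun x => lower_bound B ω hd hl x) (surj_all B ω hd h0 hs hl)
  have halg : algebraMap ℂ (X →L[ℂ] X) (lam : ℂ) - B = (u : X →L[ℂ] X) := by
    rw [Algebra.algebraMap_eq_smul_one, hu]
  constructor
  · rw [spectrum.mem_resolventSet_iff, halg]
    exact u.isUnit
  · rw [resolvent, halg, Ring.inverse_unit]
    exact hub

lemma lb_of_resolvent_bound (B : X →L[ℂ] X) (ω : ℝ) {lam : ℝ} (hl : ω < lam)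
    (hmem : (lam : ℂ) ∈ resolventSet ℂ B)
    (hbd : ‖resolvent B (lam : ℂ)‖ ≤ 1 / (lam - ω)) (x : X) :
    (lam - ω) * ‖x‖ ≤ ‖((lam : ℂ) • (1 : X →L[ℂ] X) - B) x‖ := by
  rw [spectrum.mem_resolventSet_iff] at hmem
  set T : X →L[ℂ] X := algebraMap ℂ (X →L[ℂ] X) (lam : ℂ) - B with hT
  have hTs : T = (lam : ℂ) • (1 : X →L[ℂ] X) - B := by
    rw [hT, Algebra.algebraMap_eq_smul_one]
  have hres : resolvent B (lam : ℂ) = ((hmem.unit⁻¹ : _ˣ) : X →L[ℂ] X) := by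
    have h0 := Ring.inverse_unit hmem.unit
    rw [hmem.unit_spec] at h0
    rw [resolvent, ← hT, h0]
  have hx : ((hmem.unit⁻¹ : _ˣ) : X →L[ℂ] X) (T x) = x := by
    have h1 : ((hmem.unit⁻¹ : _ˣ) : X →L[ℂ] X) * T = 1 := hmem.val_inv_mul
    calc ((hmem.unit⁻¹ : _ˣ) : X →L[ℂ] X) (T x)
        = (((hmem.unit⁻¹ : _ˣ) : X →L[ℂ] X) * T) x := rfl
      _ = x := by rw [h1]; rfl
  have h2 : ‖x‖ ≤ (1 / (lam - ω)) * ‖T x‖ := by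
    calc ‖x‖ = ‖((hmem.unit⁻¹ : _ˣ) : X →L[ℂ] X) (T x)‖ := by rw [hx]
      _ ≤ ‖((hmem.unit⁻¹ : _ˣ) : X →L[ℂ] X)‖ * ‖T x‖ := ContinuousLinearMap.le_opNorm _ _
      _ ≤ (1 / (lam - ω)) * ‖T x‖ := by
          apply mul_le_mul_of_nonneg_right _ (norm_nonneg _)
          rw [← hres]; exact hbd
  rw [← hTs]
  rw [div_mul_eq_mul_div, one_mul] at h2
  rw [le_div_iff₀ (by linarith : (0:ℝ) < lam - ω)] at h2
  linarith [h2]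

lemma dissipative_of_lb (B : X →L[ℂ] X) (ω : ℝ)
    (hlb : ∀ lam : ℝ, ω < lam → ∀ x : X, (lam - ω) * ‖x‖ ≤ ‖((lam : ℂ) • (1 : X →L[ℂ] X) - B) x‖)
    (x : X) : ∃ j ∈ dualitySet x, (j (B x)).re ≤ ω * ‖x‖ ^ 2 := by
  rcases eq_or_ne x 0 with rfl | hx
  · exact ⟨0, ⟨by simp, by simp⟩, by simp⟩
  have hxpos : 0 < ‖x‖ := norm_pos_iff.mpr hx
  have hex : ∀ lam : ℝ, ∃ g : X →L[ℂ] ℂ, ‖g‖ ≤ 1 ∧ (ω < lam →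
      g (((lam : ℂ) • (1 : X →L[ℂ] X) - B) x)
        = (‖((lam : ℂ) • (1 : X →L[ℂ] X) - B) x‖ : ℂ)) := by
    intro lam
    by_cases h : ω < lam
    · have hz : ((lam : ℂ) • (1 : X →L[ℂ] X) - B) x ≠ 0 := by
        intro h0
        have h1 := hlb lam h x
        rw [h0, norm_zero] at h1
        nlinarith
      obtain ⟨g, hg1, hg2⟩ := exists_dual_vector ℂ _ (norm_ne_zero_iff.mpr hz)
      exact ⟨g, le_of_eq hg1, fun _ => hg2⟩
    · exact ⟨0, by simp, fun h' => absurd h' h⟩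
  choose f hf1 hf2 using hex
  -- basic estimates
  have heq : ∀ lam : ℝ, ω < lam →
      lam * (f lam x).re - (f lam (B x)).re = ‖((lam : ℂ) • (1 : X →L[ℂ] X) - B) x‖ := by
    intro lam h
    have h1 := hf2 lam h
    have h2 : f lam (((lam : ℂ) • (1 : X →L[ℂ] X) - B) x)
        = (lam : ℂ) * f lam x - f lam (B x) := by
      simp [ContinuousLinearMap.sub_apply, ContinuousLinearMap.smul_apply, map_sub]
    rw [h2] at h1
    have := congrArg Complex.re h1
    simpa [Complex.ofReal_re] using this
  have hfx_le : ∀ lam : ℝ, (f lam x).re ≤ ‖x‖ := by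
    intro lam
    calc (f lam x).re ≤ ‖f lam x‖ := Complex.re_le_norm _
      _ ≤ ‖f lam‖ * ‖x‖ := (f lam).le_opNorm x
      _ ≤ 1 * ‖x‖ := mul_le_mul_of_nonneg_right (hf1 lam) (norm_nonneg x)
      _ = ‖x‖ := one_mul _
  have hfB_ge : ∀ lam : ℝ, -‖B x‖ ≤ (f lam (B x)).re := by
    intro lam
    have h1 : ‖f lam (B x)‖ ≤ ‖B x‖ := by
      calc ‖f lam (B x)‖ ≤ ‖f lam‖ * ‖B x‖ := (f lam).le_opNorm _
        _ ≤ 1 * ‖B x‖ := mul_le_mul_of_nonneg_right (hf1 lam) (norm_nonneg _)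
        _ = ‖B x‖ := one_mul _
    have h2 : |(f lam (B x)).re| ≤ ‖f lam (B x)‖ := Complex.abs_re_le_norm _
    have := abs_le.mp (le_trans h2 h1)
    linarith [this.1]
  have key1 : ∀ lam : ℝ, ω < lam → 0 < lam → (f lam (B x)).re ≤ ω * ‖x‖ := by
    intro lam h h0
    have h1 := heq lam h
    have h2 := hlb lam h x
    have h3 := hfx_le lam
    nlinarith [mul_le_mul_of_nonneg_left h3 (le_of_lt h0)]
  have key2 : ∀ lam : ℝ, ω < lam → 0 < lam →
      ‖x‖ - (ω * ‖x‖ + ‖B x‖) / lam ≤ (f lam x).re := by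
    intro lam h h0
    have h1 := heq lam h
    have h2 := hlb lam h x
    have h4 := hfB_ge lam
    have h5 : lam * (‖x‖ - (ω * ‖x‖ + ‖B x‖) / lam) ≤ lam * (f lam x).re := by
      rw [mul_sub, mul_div_cancel₀ _ (ne_of_gt h0)]
      nlinarith
    exact le_of_mul_le_mul_left h5 h0
  -- Banach-Alaoglu via ultrafilter
  set U : Ultrafilter ℝ := Ultrafilter.of atTop with hUdef
  have hU : (U : Filter ℝ) ≤ atTop := Ultrafilter.of_le _
  have hUb : (U : Filter ℝ).NeBot := U.neBot
  set K : Set (WeakDual ℂ X) := ⇑WeakDual.toStrongDual ⁻¹' Metric.closedBall 0 1 with hK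
  have hKc : IsCompact K := WeakDual.isCompact_closedBall 0 1
  set F : ℝ → WeakDual ℂ X := fun lam => StrongDual.toWeakDual (f lam) with hF
  have hmem : ∀ lam, F lam ∈ K := by
    intro lam
    simp only [hK, Set.mem_preimage, Metric.mem_closedBall, dist_zero_right]
    exact hf1 lam
  obtain ⟨φ, hφK, hφle⟩ := hKc.ultrafilter_le_nhds (U.map F)
    (by rw [Ultrafilter.coe_map]
        exact Filter.le_principal_iff.mpr (Filter.mem_map.mpr (Filter.univ_mem' hmem)))
  have hTend : Tendsto F (U : Filter ℝ) (𝓝 φ) := by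
    have h := hφle; rwa [Ultrafilter.coe_map] at h
  have hEval : ∀ y : X, Tendsto (fun lam => (f lam) y) (U : Filter ℝ) (𝓝 (φ y)) :=
    fun y => ((WeakDual.eval_continuous y).tendsto φ).comp hTend
  have hev : ∀ᶠ lam in (U : Filter ℝ), ω < lam ∧ 0 < lam := by
    apply hU
    exact eventually_atTop.mpr ⟨max ω 0 + 1, fun lam hl =>
      ⟨lt_of_le_of_lt (le_max_left ω 0) (by linarith [le_max_left ω 0, le_max_right ω 0]),
       lt_of_le_of_lt (le_max_right ω 0) (by linarith [le_max_right ω 0])⟩⟩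
  have hφnorm : ‖WeakDual.toStrongDual φ‖ ≤ 1 := by
    have h := hφK
    rw [hK, Set.mem_preimage, Metric.mem_closedBall, dist_zero_right] at h
    exact h
  have hφB : (φ (B x)).re ≤ ω * ‖x‖ := by
    apply le_of_tendsto ((Complex.continuous_re.tendsto _).comp (hEval (B x)))
    exact hev.mono fun lam hlam => key1 lam hlam.1 hlam.2
  have hφx : ‖x‖ ≤ (φ x).re := by
    have hg0 : Tendsto (fun lam : ℝ => (ω * ‖x‖ + ‖B x‖) / lam) (U : Filter ℝ) (𝓝 0) :=
      (tendsto_const_nhds.div_atTop tendsto_id).mono_left hU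
    have hg : Tendsto (fun lam : ℝ => ‖x‖ - (ω * ‖x‖ + ‖B x‖) / lam) (U : Filter ℝ)
        (𝓝 (‖x‖ - 0)) := tendsto_const_nhds.sub hg0
    rw [sub_zero] at hg
    refine le_of_tendsto_of_tendsto hg
      ((Complex.continuous_re.tendsto _).comp (hEval x)) ?_
    exact hev.mono fun lam hlam => key2 lam hlam.1 hlam.2
  -- φ as a normed functional
  set ψ : X →L[ℂ] ℂ := WeakDual.toStrongDual φ with hψ
  have hψx_abs : ‖ψ x‖ ≤ ‖x‖ := by
    calc ‖ψ x‖ ≤ ‖ψ‖ * ‖x‖ := ψ.le_opNorm x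
      _ ≤ 1 * ‖x‖ := mul_le_mul_of_nonneg_right hφnorm (norm_nonneg x)
      _ = ‖x‖ := one_mul _
  have hψeval : ∀ y : X, ψ y = φ y := fun y => rfl
  have hre : (ψ x).re = ‖x‖ := by
    refine le_antisymm ?_ (by rw [hψeval]; exact hφx)
    calc (ψ x).re ≤ ‖ψ x‖ := Complex.re_le_norm _
      _ ≤ ‖x‖ := hψx_abs
  have him : (ψ x).im = 0 := by
    have h1 : (ψ x).re ^ 2 + (ψ x).im ^ 2 = ‖ψ x‖ ^ 2 := by
      rw [Complex.sq_norm, Complex.normSq_apply]; ring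
    have h2 : ‖ψ x‖ ^ 2 ≤ ‖x‖ ^ 2 := by nlinarith [norm_nonneg (ψ x)]
    nlinarith [sq_nonneg (ψ x).im]
  have hψxval : ψ x = (‖x‖ : ℂ) := by
    apply Complex.ext
    · rw [hre, Complex.ofReal_re]
    · rw [him, Complex.ofReal_im]
  have hψB : (ψ (B x)).re ≤ ω * ‖x‖ := by rw [hψeval]; exact hφB
  -- construct j
  refine ⟨(‖x‖ : ℂ) • ψ, ⟨?_, ?_⟩, ?_⟩
  · show (‖x‖ : ℂ) • ψ x = ((‖x‖ ^ 2 : ℝ) : ℂ)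
    rw [smul_eq_mul, hψxval]
    push_cast
    ring
  · refine le_antisymm ?_ ?_
    · calc ‖(‖x‖ : ℂ) • ψ‖ ≤ ‖(‖x‖ : ℂ)‖ * ‖ψ‖ := ContinuousLinearMap.opNorm_smul_le _ _
        _ ≤ ‖x‖ * 1 := by
            rw [Complex.norm_real, Real.norm_eq_abs, _root_.abs_of_nonneg (norm_nonneg x)]
            exact mul_le_mul_of_nonneg_left hφnorm (norm_nonneg x)
        _ = ‖x‖ := mul_one _
    · have h1 : ‖((‖x‖ : ℂ) • ψ) x‖ = ‖x‖ ^ 2 := by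
        show ‖(‖x‖ : ℂ) • ψ x‖ = ‖x‖ ^ 2
        rw [smul_eq_mul, hψxval, ← Complex.ofReal_mul, Complex.norm_real,
          Real.norm_eq_abs, _root_.abs_of_nonneg (by positivity), sq]
      have h2 : ‖((‖x‖ : ℂ) • ψ) x‖ ≤ ‖(‖x‖ : ℂ) • ψ‖ * ‖x‖ :=
        ContinuousLinearMap.le_opNorm _ _
      rw [h1] at h2
      nlinarith
  · show ((‖x‖ : ℂ) • ψ (B x)).re ≤ ω * ‖x‖ ^ 2
    rw [smul_eq_mul, Complex.re_ofReal_mul]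
    nlinarith

lemma isUnit_smul_clm {c : ℂ} (hc : c ≠ 0) {T : X →L[ℂ] X} (h : IsUnit T) : IsUnit (c • T) := by
  refine ⟨⟨c • T, c⁻¹ • ((h.unit⁻¹ : _ˣ) : X →L[ℂ] X), ?_, ?_⟩, rfl⟩
  · rw [smul_mul_assoc, mul_smul_comm, smul_smul, mul_inv_cancel₀ hc, one_smul, h.mul_val_inv]
  · rw [smul_mul_assoc, mul_smul_comm, smul_smul, inv_mul_cancel₀ hc, one_smul, h.val_inv_mul]

lemma isUnit_smul_clm_iff {c : ℂ} (hc : c ≠ 0) {T : X →L[ℂ] X} :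
    IsUnit (c • T) ↔ IsUnit T := by
  constructor
  · intro h
    have := isUnit_smul_clm (inv_ne_zero hc) h
    rwa [smul_smul, inv_mul_cancel₀ hc, one_smul] at this
  · exact isUnit_smul_clm hc

lemma ring_inverse_smul {c : ℂ} (hc : c ≠ 0) (T : X →L[ℂ] X) :
    Ring.inverse (c • T) = c⁻¹ • Ring.inverse T := by
  by_cases h : IsUnit T
  · have hu : IsUnit (c • T) := isUnit_smul_clm hc h
    have h1 : (c • T) * (c⁻¹ • ((h.unit⁻¹ : _ˣ) : X →L[ℂ] X)) = 1 := by
      rw [smul_mul_assoc, mul_smul_comm, smul_smul, mul_inv_cancel₀ hc, one_smul, h.mul_val_inv]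
    have h2 : (c⁻¹ • ((h.unit⁻¹ : _ˣ) : X →L[ℂ] X)) * (c • T) = 1 := by
      rw [smul_mul_assoc, mul_smul_comm, smul_smul, inv_mul_cancel₀ hc, one_smul, h.val_inv_mul]
    have h3 : Ring.inverse (c • T) = c⁻¹ • ((h.unit⁻¹ : _ˣ) : X →L[ℂ] X) := by
      have h4 := Ring.inverse_unit ⟨c • T, c⁻¹ • ((h.unit⁻¹ : _ˣ) : X →L[ℂ] X), h1, h2⟩
      exact h4
    have h5 : Ring.inverse T = ((h.unit⁻¹ : _ˣ) : X →L[ℂ] X) := by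
      have h6 := Ring.inverse_unit h.unit
      rw [h.unit_spec] at h6
      exact h6
    rw [h3, h5]
  · rw [Ring.inverse_non_unit _ h, Ring.inverse_non_unit, smul_zero]
    rw [isUnit_smul_clm_iff hc]
    exact h

lemma norm_unit_smul {c : ℂ} (hc : ‖c‖ = 1) (W : X →L[ℂ] X) : ‖c • W‖ = ‖W‖ := by
  have hc0 : c ≠ 0 := by intro h; rw [h, norm_zero] at hc; norm_num at hc
  have h1 : ‖c • W‖ ≤ ‖W‖ := by
    calc ‖c • W‖ ≤ ‖c‖ * ‖W‖ := ContinuousLinearMap.opNorm_smul_le _ _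
      _ = ‖W‖ := by rw [hc, one_mul]
  have h2 : ‖W‖ ≤ ‖c • W‖ := by
    have h3 : W = c⁻¹ • (c • W) := by rw [smul_smul, inv_mul_cancel₀ hc0, one_smul]
    have h4 : ‖c⁻¹‖ = 1 := by rw [norm_inv, hc]; norm_num
    calc ‖W‖ = ‖c⁻¹ • (c • W)‖ := by rw [← h3]
      _ ≤ ‖c⁻¹‖ * ‖c • W‖ := ContinuousLinearMap.opNorm_smul_le _ _
      _ = ‖c • W‖ := by rw [h4, one_mul]
  linarith

lemma surj_smul_iff {c : ℂ} (hc : c ≠ 0) (T : X →L[ℂ] X) :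
    Function.Surjective ⇑(c • T) ↔ Function.Surjective ⇑T := by
  constructor
  · intro h y
    obtain ⟨z, hz⟩ := h (c • y)
    refine ⟨z, ?_⟩
    have : c • T z = c • y := hz
    have := congrArg (fun w => c⁻¹ • w) this
    simpa [smul_smul, inv_mul_cancel₀ hc] using this
  · intro h y
    obtain ⟨z, hz⟩ := h (c⁻¹ • y)
    refine ⟨z, ?_⟩
    show c • T z = y
    rw [hz, smul_smul, mul_inv_cancel₀ hc, one_smul]

theorem core [Nontrivial X] (B : X →L[ℂ] X) (ω : ℝ) :
    (∀ lam : ℝ, ω < lam →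
        ((lam : ℂ) ∈ resolventSet ℂ B ∧ ‖resolvent B (lam : ℂ)‖ ≤ 1 / (lam - ω))) ↔
      ((∀ x : X, ∃ j ∈ dualitySet x, (j (B x)).re ≤ ω * ‖x‖ ^ 2) ∧
        ∃ lam : ℝ, ω < lam ∧ Function.Surjective ⇑((lam : ℂ) • (1 : X →L[ℂ] X) - B)) := by
  constructor
  · intro h
    refine ⟨dissipative_of_lb B ω
      (fun lam hl x => lb_of_resolvent_bound B ω hl (h lam hl).1 (h lam hl).2 x),
      ω + 1, by linarith, ?_⟩
    have hmem := (h (ω + 1) (by linarith)).1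
    rw [spectrum.mem_resolventSet_iff] at hmem
    rw [Algebra.algebraMap_eq_smul_one] at hmem
    exact surj_of_isUnit hmem
  · rintro ⟨hd, lam₀, h0, hs⟩ lam hl
    exact reverse_core B ω hd h0 hs hl

/-- The resolvent estimate on the ray `e^{iθ}(ω, ∞)` is equivalent to a numerical-range
(Lumer–Phillips) condition together with surjectivity of `e^{iθ}λ - A` for some `λ > ω`. -/
theorem resolvent_estimate_iff_dissipative_and_surjective (A : X →L[ℂ] X) (θ ω : ℝ) :
    (∀ lam : ℝ, ω < lam →
        (Complex.exp ((θ : ℂ) * Complex.I) * (lam : ℂ)) ∈ resolventSet ℂ A ∧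
        ‖resolvent A (Complex.exp ((θ : ℂ) * Complex.I) * (lam : ℂ))‖ ≤ 1 / (lam - ω)) ↔
      ((∀ x : X, ∃ j ∈ dualitySet x,
          (Complex.exp (-(θ : ℂ) * Complex.I) * j (A x)).re ≤ ω * ‖x‖ ^ 2) ∧
        ∃ lam : ℝ, ω < lam ∧
          Function.Surjective
            ⇑((Complex.exp ((θ : ℂ) * Complex.I) * (lam : ℂ)) • (1 : X →L[ℂ] X) - A)) := by
  rcases subsingleton_or_nontrivial X with hX | hX
  · have hall : ∀ S T : X →L[ℂ] X, S = T :=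
      fun S T => ContinuousLinearMap.ext fun x => Subsingleton.elim _ _
    constructor
    · intro _
      refine ⟨fun x => ?_, ω + 1, by linarith, fun y => ⟨0, Subsingleton.elim _ _⟩⟩
      have hx0 : x = 0 := Subsingleton.elim x 0
      subst hx0
      exact ⟨0, ⟨by simp, by simp⟩, by simp⟩
    · intro _ lam hl
      constructor
      · rw [spectrum.mem_resolventSet_iff, hall (algebraMap ℂ (X →L[ℂ] X) _ - A) 1]
        exact isUnit_one
      · rw [hall (resolvent A _) 0, norm_zero]
        have : (0:ℝ) < lam - ω := by linarith
        positivity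
  · set c : ℂ := Complex.exp ((θ : ℂ) * Complex.I) with hc
    set c' : ℂ := Complex.exp (-(θ : ℂ) * Complex.I) with hc'
    have hcc' : c * c' = 1 := by
      rw [hc, hc', ← Complex.exp_add, show (θ:ℂ) * Complex.I + -(θ:ℂ) * Complex.I = 0 by ring,
        Complex.exp_zero]
    have hc0 : c ≠ 0 := Complex.exp_ne_zero _
    have hcnorm : ‖c‖ = 1 := by
      rw [hc, Complex.norm_exp]
      simp
    have hinvnorm : ‖c⁻¹‖ = 1 := by rw [norm_inv, hcnorm]; norm_num
    set B : X →L[ℂ] X := c' • A with hB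
    have hcB : c • B = A := by rw [hB, smul_smul, hcc', one_smul]
    have hfact : ∀ lam : ℝ, algebraMap ℂ (X →L[ℂ] X) (c * (lam : ℂ)) - A
        = c • (algebraMap ℂ (X →L[ℂ] X) (lam : ℂ) - B) := by
      intro lam
      rw [smul_sub, hcB, Algebra.algebraMap_eq_smul_one, Algebra.algebraMap_eq_smul_one,
        smul_smul]
    have hfact' : ∀ lam : ℝ, (c * (lam : ℂ)) • (1 : X →L[ℂ] X) - A
        = c • ((lam : ℂ) • (1 : X →L[ℂ] X) - B) := by
      intro lam
      rw [smul_sub, hcB, smul_smul]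
    have hmem_iff : ∀ lam : ℝ,
        ((c * (lam : ℂ)) ∈ resolventSet ℂ A ↔ (lam : ℂ) ∈ resolventSet ℂ B) := by
      intro lam
      rw [spectrum.mem_resolventSet_iff, spectrum.mem_resolventSet_iff, hfact lam,
        isUnit_smul_clm_iff hc0]
    have hnorm_eq : ∀ lam : ℝ, ‖resolvent A (c * (lam : ℂ))‖ = ‖resolvent B (lam : ℂ)‖ := by
      intro lam
      rw [resolvent, resolvent, hfact lam, ring_inverse_smul hc0, norm_unit_smul hinvnorm]
    have hdis : ∀ (j : X →L[ℂ] ℂ) (x : X), c' * j (A x) = j (B x) := by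
      intro j x
      rw [hB]
      simp [ContinuousLinearMap.smul_apply, map_smul, smul_eq_mul]
    have step1 : (∀ lam : ℝ, ω < lam →
        ((c * (lam : ℂ)) ∈ resolventSet ℂ A ∧ ‖resolvent A (c * (lam : ℂ))‖ ≤ 1 / (lam - ω))) ↔
        (∀ lam : ℝ, ω < lam →
        ((lam : ℂ) ∈ resolventSet ℂ B ∧ ‖resolvent B (lam : ℂ)‖ ≤ 1 / (lam - ω))) :=
      forall_congr' fun lam => imp_congr_right fun _ =>
        and_congr (hmem_iff lam) (by rw [hnorm_eq lam])
    refine step1.trans ((core B ω).trans (and_congr ?_ ?_))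
    · exact forall_congr' fun x => exists_congr fun j => and_congr_right fun _ => by
        rw [← hdis j x]
    · exact exists_congr fun lam => and_congr_right fun _ => by
        rw [hfact' lam, surj_smul_iff hc0]
end

section
/- Let X be a nontrivial complex Banach space and A a bounded linear operator on X. Then A = 0 if and only if σ_n(A) = {0}. -/
open Complex

variable {X : Type*} [NormedAddCommGroup X] [NormedSpace ℂ X] [CompleteSpace X]

lemma abs_exp_neg' (θ : ℝ) : ‖Complex.exp (-(θ : ℂ) * Complex.I)‖ = 1 := by
  rw [Complex.norm_exp]; simp

lemma exists_rot' (z : ℂ) :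
    ∃ θ : ℝ, Complex.exp (-(θ : ℂ) * Complex.I) * z = (‖z‖ : ℂ) := by
  refine ⟨z.arg, ?_⟩
  have haz : (‖z‖ : ℂ) * Complex.exp ((z.arg : ℂ) * Complex.I) = z :=
    Complex.norm_mul_exp_arg_mul_I z
  have h2 : Complex.exp (-(z.arg : ℂ) * Complex.I) *
      ((‖z‖ : ℂ) * Complex.exp ((z.arg : ℂ) * Complex.I)) = (‖z‖ : ℂ) := by
    have h3 : Complex.exp (-(z.arg : ℂ) * Complex.I) *
        ((‖z‖ : ℂ) * Complex.exp ((z.arg : ℂ) * Complex.I)) =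
        (‖z‖ : ℂ) *
        (Complex.exp (-(z.arg : ℂ) * Complex.I) * Complex.exp ((z.arg : ℂ) * Complex.I)) := by
      ring
    rw [h3, ← Complex.exp_add, neg_mul, neg_add_cancel, Complex.exp_zero, mul_one]
  rw [haz] at h2
  exact h2

/-- The one-point dissipativity estimate. -/
lemma keyD_step' (A : X →L[ℂ] X) (θ ω : ℝ)
    (hsub : halfPlane θ ω ⊆ resolventSet ℂ A)
    (hbd : ∀ w ∈ halfPlane θ ω,
      ‖resolvent A w‖ ≤ 1 / ((Complex.exp (-(θ : ℂ) * Complex.I) * w).re - ω))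
    (x : X) (hx : ‖x‖ = 1) (g : X →L[ℂ] ℂ) (hg : ‖g‖ = 1) (hgx : g x = 1)
    (s : ℝ) (hs : ω < s) (hs0 : 0 < s) :
    (Complex.exp (-(θ : ℂ) * Complex.I) * g (A x)).re ≤ (s * ω + ‖A‖ ^ 2) / (s - ω) := by
  set e : ℂ := Complex.exp (-(θ : ℂ) * Complex.I) with he
  set c : ℂ := Complex.exp ((θ : ℂ) * Complex.I) with hc
  set w : ℂ := c * (s : ℂ) with hwdef
  have hec : e * c = 1 := by
    rw [he, hc, ← Complex.exp_add, neg_mul, neg_add_cancel, Complex.exp_zero]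
  have hce : c * e = 1 := by rw [mul_comm]; exact hec
  have hew : e * w = (s : ℂ) := by rw [hwdef, ← mul_assoc, hec, one_mul]
  have hwmem : w ∈ halfPlane θ ω := by
    show ω < (e * w).re
    rw [hew]; simpa using hs
  have hw0 : w ≠ 0 := by
    intro h0
    rw [h0, mul_zero] at hew
    have : s = 0 := by exact_mod_cast hew.symm
    exact hs0.ne' this
  have hc0 : c ≠ 0 := Complex.exp_ne_zero _
  have hwinv : w⁻¹ = e * (s : ℂ)⁻¹ := by
    rw [hwdef, mul_inv]
    congr 1
    exact (eq_inv_of_mul_eq_one_left hec).symm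
  have hU : IsUnit (algebraMap ℂ (X →L[ℂ] X) w - A) := hsub hwmem
  have hd0 : (0:ℝ) < s - ω := by linarith
  have hRnorm : ‖resolvent A w‖ ≤ 1 / (s - ω) := by
    have := hbd w hwmem
    rwa [hew, Complex.ofReal_re] at this
  set y : X := (resolvent A w) x with hy
  have hyn : ‖y‖ ≤ 1 / (s - ω) := by
    calc ‖y‖ ≤ ‖resolvent A w‖ * ‖x‖ := (resolvent A w).le_opNorm x
      _ = ‖resolvent A w‖ := by rw [hx, mul_one]
      _ ≤ 1 / (s - ω) := hRnorm
  -- the fundamental identity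
  have hid : w • y - A y = x := by
    have hmi : (algebraMap ℂ (X →L[ℂ] X) w - A) * resolvent A w = 1 :=
      Ring.mul_inverse_cancel _ hU
    have h1 : ((algebraMap ℂ (X →L[ℂ] X) w - A) * resolvent A w) x = (1 : X →L[ℂ] X) x := by
      rw [hmi]
    simpa [ContinuousLinearMap.mul_apply, ContinuousLinearMap.sub_apply,
      Algebra.algebraMap_eq_smul_one, ContinuousLinearMap.smul_apply] using h1
  have hinv : w⁻¹ • x + w⁻¹ • (A y) = y := by
    have h3 : w • y = x + A y := eq_add_of_sub_eq hid
    rw [← smul_add, ← h3, smul_smul, inv_mul_cancel₀ hw0, one_smul]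
  have h4 : A y = w⁻¹ • A x + w⁻¹ • A (A y) := by
    conv_lhs => rw [← hinv]
    rw [map_add, map_smul, map_smul]
  have hgAy : g (A y) = w⁻¹ * g (A x) + w⁻¹ * g (A (A y)) := by
    conv_lhs => rw [h4]
    rw [map_add, map_smul, map_smul]
    simp [smul_eq_mul]
  have hgy1 : g y = w⁻¹ * g x + w⁻¹ * g (A y) := by
    conv_lhs => rw [← hinv]
    rw [map_add, map_smul, map_smul]
    simp [smul_eq_mul]
  have hgyval : g y = w⁻¹ + w⁻¹ * w⁻¹ * g (A x) + w⁻¹ * w⁻¹ * g (A (A y)) := by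
    rw [hgy1, hgAy, hgx]
    ring
  -- bounds
  have hgyabs : ‖g y‖ ≤ 1 / (s - ω) := by
    calc ‖g y‖ ≤ ‖g‖ * ‖y‖ := g.le_opNorm y
      _ = ‖y‖ := by rw [hg, one_mul]
      _ ≤ 1 / (s - ω) := hyn
  have hA0 : (0:ℝ) ≤ ‖A‖ := norm_nonneg A
  have hE : ‖g (A (A y))‖ ≤ ‖A‖ ^ 2 * (1 / (s - ω)) := by
    have e1 : ‖g (A (A y))‖ ≤ ‖A (A y)‖ := by
      have := g.le_opNorm (A (A y)); rwa [hg, one_mul] at this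
    have e2 : ‖A (A y)‖ ≤ ‖A‖ * ‖A y‖ := A.le_opNorm _
    have e3 : ‖A y‖ ≤ ‖A‖ * ‖y‖ := A.le_opNorm _
    nlinarith [norm_nonneg (A y), norm_nonneg y]
  -- multiply by c
  have hkey : c * g y = ((s:ℝ)⁻¹ : ℂ) + ((s:ℝ)⁻¹ : ℂ) * ((s:ℝ)⁻¹ : ℂ) * (e * g (A x))
      + ((s:ℝ)⁻¹ : ℂ) * ((s:ℝ)⁻¹ : ℂ) * (e * g (A (A y))) := by
    rw [hgyval, hwinv]
    push_cast
    linear_combination (((s:ℂ))⁻¹ + ((s:ℂ))⁻¹ * ((s:ℂ))⁻¹ * (e * g (A x))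
      + ((s:ℂ))⁻¹ * ((s:ℂ))⁻¹ * (e * g (A (A y)))) * hce
  have hcast : ((s : ℂ))⁻¹ = ((s⁻¹ : ℝ) : ℂ) := by push_cast; ring
  have hre1 : (c * g y).re = s⁻¹ + s⁻¹ * s⁻¹ * (e * g (A x)).re
      + s⁻¹ * s⁻¹ * (e * g (A (A y))).re := by
    rw [hkey, hcast, ← Complex.ofReal_mul]
    simp [Complex.add_re, Complex.re_ofReal_mul, Complex.ofReal_re]
  -- real bounds
  set μ : ℝ := (e * g (A x)).re with hμ
  set r : ℝ := (e * g (A (A y))).re with hr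
  have b1 : (c * g y).re ≤ 1 / (s - ω) := by
    have h5 : (c * g y).re ≤ ‖c * g y‖ := Complex.re_le_norm _
    have h6 : ‖c * g y‖ = ‖g y‖ := by
      rw [norm_mul]
      have : ‖c‖ = 1 := by rw [hc, Complex.norm_exp]; simp
      rw [this, one_mul]
    rw [h6] at h5
    exact h5.trans hgyabs
  have b2 : -(‖A‖ ^ 2 * (1 / (s - ω))) ≤ r := by
    have h7 : |r| ≤ ‖e * g (A (A y))‖ := Complex.abs_re_le_norm _
    have h8 : ‖e * g (A (A y))‖ = ‖g (A (A y))‖ := by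
      rw [norm_mul, he, abs_exp_neg', one_mul]
    have := neg_abs_le r
    nlinarith
  -- combine
  have hσ : s⁻¹ > 0 := by positivity
  have hfin : s⁻¹ + s⁻¹ * s⁻¹ * μ + s⁻¹ * s⁻¹ * r ≤ 1 / (s - ω) := by
    rw [← hre1]; exact b1
  have h9 : s * s * (s⁻¹ + s⁻¹ * s⁻¹ * μ + s⁻¹ * s⁻¹ * r) = s + μ + r := by
    field_simp
  have h10 : s + μ + r ≤ s * s * (1 / (s - ω)) := by
    rw [← h9]
    exact mul_le_mul_of_nonneg_left hfin (by positivity)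
  have h11 : s * s * (1 / (s - ω)) + ‖A‖ ^ 2 * (1 / (s - ω)) - s = (s * ω + ‖A‖ ^ 2) / (s - ω) := by
    field_simp
    ring
  linarith

/-- The dissipativity estimate, in the limit. -/
lemma keyD' (A : X →L[ℂ] X) (θ ω : ℝ)
    (hsub : halfPlane θ ω ⊆ resolventSet ℂ A)
    (hbd : ∀ w ∈ halfPlane θ ω,
      ‖resolvent A w‖ ≤ 1 / ((Complex.exp (-(θ : ℂ) * Complex.I) * w).re - ω))
    (x : X) (hx : ‖x‖ = 1) (g : X →L[ℂ] ℂ) (hg : ‖g‖ = 1) (hgx : g x = 1) :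
    (Complex.exp (-(θ : ℂ) * Complex.I) * g (A x)).re ≤ ω := by
  have htend0 : Filter.Tendsto (fun s : ℝ => ω + (ω * ω + ‖A‖ ^ 2) / (s - ω))
      Filter.atTop (nhds (ω + 0)) := by
    apply Filter.Tendsto.add tendsto_const_nhds
    apply Filter.Tendsto.div_atTop tendsto_const_nhds
    exact Filter.tendsto_atTop_add_const_right _ (-ω) Filter.tendsto_id
  rw [add_zero] at htend0
  have htend : Filter.Tendsto (fun s : ℝ => (s * ω + ‖A‖ ^ 2) / (s - ω))
      Filter.atTop (nhds ω) := by
    apply htend0.congr'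
    filter_upwards [Filter.eventually_gt_atTop ω] with s hsω
    have hd : s - ω ≠ 0 := by linarith
    field_simp
    ring
  refine ge_of_tendsto htend ?_
  filter_upwards [Filter.eventually_gt_atTop ω, Filter.eventually_gt_atTop 0] with s h1 h2
  exact keyD_step' A θ ω hsub hbd x hx g hg hgx s h1 h2

/-- `A = 0` if and only if `σ_n(A) = {0}`. -/
theorem eq_zero_iff_numSpectrum_eq_zero [Nontrivial X] (A : X →L[ℂ] X) :
    A = 0 ↔ numSpectrum A = {0} := by
  have hnt1 : (1 : X →L[ℂ] X) ≠ 0 := by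
    obtain ⟨x, hx⟩ := exists_ne (0 : X)
    intro h
    apply hx
    calc x = (1 : X →L[ℂ] X) x := rfl
      _ = (0 : X →L[ℂ] X) x := by rw [h]
      _ = 0 := rfl
  constructor
  · rintro rfl
    have hnres : numResolventSet (0 : X →L[ℂ] X) = {(0:ℂ)}ᶜ := by
      ext z
      constructor
      · rintro ⟨θ, ω, hmem, hsub, -⟩
        intro hz0
        have hz : z = 0 := hz0
        have hres := hsub hmem
        rw [hz] at hres
        have : IsUnit ((0 : X →L[ℂ] X)) := by
          have h0 : algebraMap ℂ (X →L[ℂ] X) 0 - 0 = 0 := by simp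
          rw [← h0]
          exact hres
        rw [isUnit_zero_iff] at this
        exact hnt1 this.symm
      · intro hz0
        have hz : z ≠ 0 := hz0
        obtain ⟨θ, hθ⟩ := exists_rot' z
        refine ⟨θ, 0, ?_, ?_, ?_⟩
        · show (0:ℝ) < _
          rw [hθ]
          simpa using hz
        · intro w hw
          have hw0 : w ≠ 0 := by
            intro h0
            simp [halfPlane, h0] at hw
          show IsUnit _
          rw [sub_zero]
          exact (isUnit_iff_ne_zero.mpr hw0).map (algebraMap ℂ (X →L[ℂ] X))
        · intro w hw
          have hw0 : w ≠ 0 := by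
            intro h0
            simp [halfPlane, h0] at hw
          have hre : (0:ℝ) < (Complex.exp (-(θ : ℂ) * Complex.I) * w).re := hw
          have hu : (algebraMap ℂ (X →L[ℂ] X) w) * (algebraMap ℂ (X →L[ℂ] X) w⁻¹) = 1 := by
            rw [← map_mul, mul_inv_cancel₀ hw0, map_one]
          have hu' : (algebraMap ℂ (X →L[ℂ] X) w⁻¹) * (algebraMap ℂ (X →L[ℂ] X) w) = 1 := by
            rw [← map_mul, inv_mul_cancel₀ hw0, map_one]
          have hres : resolvent (0 : X →L[ℂ] X) w = algebraMap ℂ (X →L[ℂ] X) w⁻¹ := by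
            rw [resolvent, sub_zero]
            exact Ring.inverse_unit ⟨_, _, hu, hu'⟩
          rw [hres, sub_zero]
          have hnorm : ‖algebraMap ℂ (X →L[ℂ] X) w⁻¹‖ = ‖w⁻¹‖ := by
            rw [Algebra.algebraMap_eq_smul_one, norm_smul, norm_one, mul_one]
          rw [hnorm, norm_inv, one_div]
          apply inv_anti₀ hre
          calc (Complex.exp (-(θ : ℂ) * Complex.I) * w).re
              ≤ ‖Complex.exp (-(θ : ℂ) * Complex.I) * w‖ := Complex.re_le_norm _
            _ = ‖w‖ := by rw [norm_mul, abs_exp_neg', one_mul]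
    rw [numSpectrum, hnres, compl_compl]
  · intro h
    have hres : ∀ z : ℂ, z ≠ 0 → z ∈ numResolventSet A := by
      intro z hz
      by_contra hc
      have : z ∈ numSpectrum A := hc
      rw [h] at this
      exact hz this
    -- every point of the numerical range is zero
    have hJ : ∀ x : X, x ≠ 0 → ∃ g : X →L[ℂ] ℂ, ‖g‖ = 1 ∧ g x = (‖x‖ : ℂ) ∧ g (A x) = 0 := by
      intro x hx
      obtain ⟨g, hg1, hg2⟩ := exists_dual_vector ℂ x (norm_ne_zero_iff.mpr hx)
      refine ⟨g, hg1, hg2, ?_⟩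
      have hxn : ‖x‖ ≠ 0 := norm_ne_zero_iff.mpr hx
      have hxc : ((‖x‖ : ℝ) : ℂ) ≠ 0 := by exact_mod_cast hxn
      set u : X := ((‖x‖ : ℂ))⁻¹ • x with hu
      have hun : ‖u‖ = 1 := by
        rw [hu, norm_smul, norm_inv, Complex.norm_real, Real.norm_eq_abs,
          _root_.abs_of_nonneg (norm_nonneg x), inv_mul_cancel₀ hxn]
      have hgu : g u = 1 := by
        rw [hu, map_smul, smul_eq_mul, hg2]
        exact inv_mul_cancel₀ hxc
      have hzero : g (A u) = 0 := by
        by_contra hne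
        obtain ⟨θ, ω, hmem, hsub, hbd⟩ := hres (g (A u)) hne
        have hle := keyD' A θ ω hsub hbd u hun g hg1 hgu
        have hlt : ω < (Complex.exp (-(θ : ℂ) * Complex.I) * g (A u)).re := hmem
        linarith
      have hax : A x = (‖x‖ : ℂ) • A u := by
        rw [hu, map_smul, smul_smul, mul_inv_cancel₀ hxc, one_smul]
      rw [hax, map_smul, hzero, smul_zero]
    -- invertibility of 1 + w A
    have hunit : ∀ wc : ℂ, IsUnit ((1 : X →L[ℂ] X) + wc • A) := by
      intro wc
      rcases eq_or_ne wc 0 with rfl | hwc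
      · simp
      · have h1 : (-wc⁻¹) ∈ resolventSet ℂ A := by
          obtain ⟨θ, ω, hmem, hsub, -⟩ := hres (-wc⁻¹) (by simp [hwc])
          exact hsub hmem
        have h2 : (1 : X →L[ℂ] X) + wc • A =
            algebraMap ℂ (X →L[ℂ] X) (-wc) * (algebraMap ℂ (X →L[ℂ] X) (-wc⁻¹) - A) := by
          rw [mul_sub, ← map_mul, neg_mul_neg, mul_inv_cancel₀ hwc, map_one,
            ← Algebra.smul_def, neg_smul, sub_neg_eq_add]
        rw [h2]
        exact ((isUnit_iff_ne_zero.mpr (neg_ne_zero.mpr hwc)).map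
          (algebraMap ℂ (X →L[ℂ] X))).mul h1
    -- lower bound
    have hlow : ∀ (wc : ℂ) (v : X), ‖v‖ ≤ ‖((1 : X →L[ℂ] X) + wc • A) v‖ := by
      intro wc v
      rcases eq_or_ne v 0 with rfl | hv
      · simp
      obtain ⟨g, hg1, hg2, hg3⟩ := hJ v hv
      have h5 : g (((1 : X →L[ℂ] X) + wc • A) v) = (‖v‖ : ℂ) := by
        simp [ContinuousLinearMap.add_apply, ContinuousLinearMap.smul_apply, hg2, hg3]
      calc ‖v‖ = ‖g (((1 : X →L[ℂ] X) + wc • A) v)‖ := by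
            rw [h5, Complex.norm_real, Real.norm_eq_abs, _root_.abs_of_nonneg (norm_nonneg v)]
        _ ≤ ‖g‖ * ‖((1 : X →L[ℂ] X) + wc • A) v‖ := g.le_opNorm _
        _ = ‖((1 : X →L[ℂ] X) + wc • A) v‖ := by rw [hg1, one_mul]
    have hinvnorm : ∀ wc : ℂ, ‖Ring.inverse ((1 : X →L[ℂ] X) + wc • A)‖ ≤ 1 := by
      intro wc
      apply ContinuousLinearMap.opNorm_le_bound _ zero_le_one
      intro v
      have hmi : ((1 : X →L[ℂ] X) + wc • A) * Ring.inverse ((1 : X →L[ℂ] X) + wc • A) = 1 :=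
        Ring.mul_inverse_cancel _ (hunit wc)
      have h6 : ((1 : X →L[ℂ] X) + wc • A) ((Ring.inverse ((1 : X →L[ℂ] X) + wc • A)) v) = v := by
        calc ((1 : X →L[ℂ] X) + wc • A) ((Ring.inverse ((1 : X →L[ℂ] X) + wc • A)) v)
            = (((1 : X →L[ℂ] X) + wc • A) * Ring.inverse ((1 : X →L[ℂ] X) + wc • A)) v := rfl
          _ = v := by rw [hmi]; rfl
      have h7 := hlow wc ((Ring.inverse ((1 : X →L[ℂ] X) + wc • A)) v)
      rw [h6] at h7
      simpa using h7
    -- Liouville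
    have hdiff : Differentiable ℂ (fun wc : ℂ => Ring.inverse ((1 : X →L[ℂ] X) + wc • A)) := by
      intro wc
      have h7 : DifferentiableAt ℂ (fun wc : ℂ => (1 : X →L[ℂ] X) + wc • A) wc :=
        (differentiableAt_const _).add (differentiableAt_id.smul_const A)
      exact (differentiableAt_inverse (hunit wc)).comp wc h7
    have hbdd : Bornology.IsBounded
        (Set.range (fun wc : ℂ => Ring.inverse ((1 : X →L[ℂ] X) + wc • A))) := by
      apply isBounded_iff_forall_norm_le.2
      exact ⟨1, by rintro _ ⟨wc, rfl⟩; exact hinvnorm wc⟩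
    have heq := hdiff.apply_eq_apply_of_bounded hbdd 1 0
    simp only [zero_smul, add_zero, Ring.inverse_one, one_smul] at heq
    -- heq : Ring.inverse (1 + A) = 1
    have hfin := Ring.inverse_mul_cancel _ (hunit 1)
    rw [one_smul] at hfin
    rw [heq, one_mul] at hfin
    -- hfin : 1 + A = 1
    have : A = (1 + A) - 1 := by abel
    rw [this, hfin]
    abel
end
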